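/- Let n, m ≥ 1 and let π ∈ J_{2n,2m}; set I = I_{2n+2m}. Then every cycle (orbit) of the composed permutation I∘π has even cardinality. -/

import Mathlib

noncomputable def cycleCount {N : ℕ} (π : Equiv.Perm (Fin N)) : ℕ :=
  Set.ncard {O : Set (Fin N) | ∃ x, O = {y | π.SameCycle x y}}

noncomputable def cyclesIn {N : ℕ} (π : Equiv.Perm (Fin N)) (C : Set (Fin N)) : ℕ :=
  Set.ncard {O : Set (Fin N) | (∃ x, O = {y | π.SameCycle x y}) ∧ O ⊆ C}

/-- The annular permutation `γ_{p,q}` of `{1,…,p+q}` (0-indexed as `Fin (p+q)`),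
with the two cycles `(1,…,p)` and `(p+1,…,p+q)`. -/
def annularGamma (p q : ℕ) : Equiv.Perm (Fin (p + q)) :=
  finSumFinEquiv.permCongr ((finRotate p).sumCongr (finRotate q))

/-- The interval involution `I_N = (1 2)(3 4)⋯(N-1 N)` of `{1,…,N}`
(0-indexed: swaps `2i ↔ 2i+1`), for `N` even. -/
def intervalInvolution (N : ℕ) : Equiv.Perm (Fin N) :=
  Function.Involutive.toPerm
    (fun x => ⟨if x.val % 2 = 0 then min (x.val + 1) (N - 1) else x.val - 1, by
      rcases x with ⟨v, hv⟩
      dsimp only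
      split <;> omega⟩)
    (by
      intro x
      rcases x with ⟨v, hv⟩
      apply Fin.ext
      dsimp only
      split_ifs <;> omega)

/-- The subgroup generated by `π` and `ρ` acts transitively on `Fin N`. -/
def JointTrans {N : ℕ} (π ρ : Equiv.Perm (Fin N)) : Prop :=
  ∀ x y : Fin N, ∃ g ∈ Subgroup.closure ({π, ρ} : Set (Equiv.Perm (Fin N))), g x = y

/-- `α` separates even numbers: no cycle of `α` contains two distinct even numbers
(an element `x : Fin N` represents the number `x.val + 1`). -/
def SeparatesEven {N : ℕ} (α : Equiv.Perm (Fin N)) : Prop :=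
  ∀ x y : Fin N, α.SameCycle x y → (x.val + 1) % 2 = 0 → (y.val + 1) % 2 = 0 → x = y

/-- `π ∈ S_NC(p,q)`: annular non-crossing permutations. -/
def AnnularNC (p q : ℕ) (π : Equiv.Perm (Fin (p + q))) : Prop :=
  JointTrans π (annularGamma p q) ∧
    cycleCount π + cycleCount (π⁻¹ * annularGamma p q) = p + q

/-- `A` witnesses bipartiteness of the graph `G_π`: `π(A) = A` and for each `i`,
exactly one of the (1-indexed) numbers `2i-1`, `2i` belongs to `A`. -/
def BipartSet {N : ℕ} (π : Equiv.Perm (Fin N)) (A : Set (Fin N)) : Prop :=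
  (⇑π) '' A = A ∧ ∀ i : ℕ, ∀ h : 2 * i + 1 < N,
    Xor' ((⟨2 * i, Nat.lt_of_succ_lt h⟩ : Fin N) ∈ A) ((⟨2 * i + 1, h⟩ : Fin N) ∈ A)

/-- The graph `G_π` is bipartite. -/
def GraphBipartite {N : ℕ} (π : Equiv.Perm (Fin N)) : Prop :=
  ∃ A : Set (Fin N), BipartSet π A

/-- `π ∈ J_{2n,2m}`: annular non-crossing, bipartite graph, and `π⁻¹γ` separates even. -/
def memJ (n m : ℕ) (π : Equiv.Perm (Fin (2 * n + 2 * m))) : Prop :=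
  AnnularNC (2 * n) (2 * m) π ∧ GraphBipartite π ∧
    SeparatesEven (π⁻¹ * annularGamma (2 * n) (2 * m))

theorem stmt_7 (n m : ℕ) (hn : 1 ≤ n) (hm : 1 ≤ m)
    (π : Equiv.Perm (Fin (2 * n + 2 * m))) (hπ : memJ n m π) :
    ∀ x : Fin (2 * n + 2 * m),
      Even (Set.ncard {y | (intervalInvolution (2 * n + 2 * m) * π).SameCycle x y}) := by
  obtain ⟨-, ⟨A, hAeq, hAxor⟩, -⟩ := hπ
  set σ := intervalInvolution (2 * n + 2 * m) * π with hσ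
  have hπA : ∀ z : Fin (2 * n + 2 * m), z ∈ A ↔ π z ∈ A := by
    intro z
    constructor
    · intro hz; rw [← hAeq]; exact ⟨z, hz, rfl⟩
    · intro hz
      rw [← hAeq] at hz
      obtain ⟨w, hw, hwz⟩ := hz
      rwa [← π.injective hwz]
  have hI : ∀ z : Fin (2 * n + 2 * m),
      z ∈ A ↔ intervalInvolution (2 * n + 2 * m) z ∉ A := by
    rintro ⟨v, hv⟩
    rcases Nat.even_or_odd v with he | ho
    · obtain ⟨i, hi⟩ := he
      have h1 : 2 * i + 1 < 2 * n + 2 * m := by omega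
      have hXor := hAxor i h1
      have heq : intervalInvolution (2 * n + 2 * m) ⟨v, hv⟩ = ⟨2 * i + 1, h1⟩ := by
        apply Fin.ext
        show (if v % 2 = 0 then min (v + 1) (2 * n + 2 * m - 1) else v - 1) = 2 * i + 1
        split_ifs <;> omega
      rw [heq]
      have hv2 : (⟨v, hv⟩ : Fin (2 * n + 2 * m)) = ⟨2 * i, Nat.lt_of_succ_lt h1⟩ := by
        simp only [Fin.mk.injEq]; omega
      rw [hv2]
      rcases hXor with ⟨h1', h2'⟩ | ⟨h1', h2'⟩ <;> tauto
    · obtain ⟨i, hi⟩ := ho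
      have h1 : 2 * i + 1 < 2 * n + 2 * m := by omega
      have hXor := hAxor i h1
      have heq : intervalInvolution (2 * n + 2 * m) ⟨v, hv⟩
          = ⟨2 * i, Nat.lt_of_succ_lt h1⟩ := by
        apply Fin.ext
        show (if v % 2 = 0 then min (v + 1) (2 * n + 2 * m - 1) else v - 1) = 2 * i
        split_ifs <;> omega
      rw [heq]
      have hv2 : (⟨v, hv⟩ : Fin (2 * n + 2 * m)) = ⟨2 * i + 1, h1⟩ := by
        simp only [Fin.mk.injEq]; omega
      rw [hv2]
      rcases hXor with ⟨h1', h2'⟩ | ⟨h1', h2'⟩ <;> tauto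
  have hflip : ∀ z : Fin (2 * n + 2 * m), z ∈ A ↔ σ z ∉ A := by
    intro z
    rw [hπA z]
    have hz : σ z = intervalInvolution (2 * n + 2 * m) (π z) := rfl
    rw [hz]
    exact hI (π z)
  intro x
  set O : Set (Fin (2 * n + 2 * m)) := {y | σ.SameCycle x y} with hO
  have himg : σ '' (O ∩ A) = O ∩ Aᶜ := by
    ext w
    constructor
    · rintro ⟨z, ⟨hzO, hzA⟩, rfl⟩
      exact ⟨(Equiv.Perm.sameCycle_apply_right).mpr hzO, (hflip z).mp hzA⟩
    · rintro ⟨hwO, hwA⟩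
      refine ⟨σ⁻¹ w, ⟨?_, ?_⟩, Equiv.apply_symm_apply _ _⟩
      · exact (Equiv.Perm.sameCycle_symm_apply_right).mpr hwO
      · exact (hflip (σ⁻¹ w)).mpr (by simpa using hwA)
  have hcard : (O ∩ Aᶜ).ncard = (O ∩ A).ncard := by
    rw [← himg, Set.ncard_image_of_injective _ σ.injective]
  have hunion : (O ∩ A) ∪ (O ∩ Aᶜ) = O := by
    ext z; by_cases hz : z ∈ A <;> simp [hz]
  have hdisj : Disjoint (O ∩ A) (O ∩ Aᶜ) := by
    apply Set.disjoint_left.mpr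
    rintro z ⟨-, hzA⟩ ⟨-, hzA'⟩
    exact hzA' hzA
  have hsum := Set.ncard_union_eq hdisj (Set.toFinite _) (Set.toFinite _)
  rw [hunion, hcard] at hsum
  exact ⟨(O ∩ A).ncard, hsum⟩
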